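/- For any subset A of the Pauli strings P_n, the Lie algebra generated by iA inside su(2ⁿ) has a basis consisting of Pauli strings times i; that is, Lie⟨A⟩ equals the real linear span of iP_n ∩ Lie⟨A⟩. -/

import Mathlib

open Matrix

attribute [local instance 100] LieRing.ofAssociativeRing

noncomputable def pauli : Fin 4 → Matrix (Fin 2) (Fin 2) ℂ :=
  ![1, !![0, 1; 1, 0], !![0, -Complex.I; Complex.I, 0], !![1, 0; 0, -1]]

noncomputable def pauliString {n : ℕ} (s : Fin n → Fin 4) :
    Matrix (Fin n → Fin 2) (Fin n → Fin 2) ℂ :=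
  Matrix.of fun v w => ∏ j, pauli (s j) (v j) (w j)

def PauliStrings (n : ℕ) : Set (Matrix (Fin n → Fin 2) (Fin n → Fin 2) ℂ) :=
  Set.range (pauliString (n := n))

/-- Index of the product of two Pauli matrices. -/
def mulIdx : Fin 4 → Fin 4 → Fin 4 :=
  ![![0,1,2,3], ![1,0,3,2], ![2,3,0,1], ![3,2,1,0]]

/-- Phase of the product of two Pauli matrices. -/
noncomputable def mulCoef : Fin 4 → Fin 4 → ℂ :=
  ![![1,1,1,1], ![1,1,Complex.I,-Complex.I], ![1,-Complex.I,1,Complex.I], ![1,Complex.I,-Complex.I,1]]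

lemma pauli_mul (a b : Fin 4) : pauli a * pauli b = mulCoef a b • pauli (mulIdx a b) := by
  fin_cases a <;> fin_cases b <;>
    · ext i j
      fin_cases i <;> fin_cases j <;>
        simp [pauli, mulCoef, mulIdx, Matrix.mul_apply, Fin.sum_univ_two, vecHead, vecTail,
          Complex.ext_iff]

lemma mulIdx_comm : ∀ a b : Fin 4, mulIdx a b = mulIdx b a := by decide

lemma mulCoef_conj (a b : Fin 4) : mulCoef b a = (starRingEnd ℂ) (mulCoef a b) := by
  fin_cases a <;> fin_cases b <;> simp [mulCoef, vecHead, vecTail]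

lemma pauliString_mul {n : ℕ} (s t : Fin n → Fin 4) :
    pauliString s * pauliString t =
      (∏ j, mulCoef (s j) (t j)) • pauliString (fun j => mulIdx (s j) (t j)) := by
  ext v w
  have key : ∀ j : Fin n, ∑ x : Fin 2, pauli (s j) (v j) x * pauli (t j) x (w j)
      = mulCoef (s j) (t j) * pauli (mulIdx (s j) (t j)) (v j) (w j) := by
    intro j
    have := congrArg (fun M => M (v j) (w j)) (pauli_mul (s j) (t j))
    simpa [Matrix.mul_apply, Matrix.smul_apply, smul_eq_mul] using this
  calc (pauliString s * pauliString t) v w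
      = ∑ u : Fin n → Fin 2, ∏ j, (pauli (s j) (v j) (u j) * pauli (t j) (u j) (w j)) := by
        simp [pauliString, Matrix.mul_apply, Finset.prod_mul_distrib]
    _ = ∏ j, ∑ x : Fin 2, pauli (s j) (v j) x * pauli (t j) x (w j) := by
        rw [Finset.prod_univ_sum]
        simp [Fintype.piFinset_univ]
    _ = ∏ j, (mulCoef (s j) (t j) * pauli (mulIdx (s j) (t j)) (v j) (w j)) := by
        exact Finset.prod_congr rfl fun j _ => key j
    _ = ((∏ j, mulCoef (s j) (t j)) • pauliString (fun j => mulIdx (s j) (t j))) v w := by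
        simp [pauliString, Finset.prod_mul_distrib, smul_eq_mul]

lemma bracket_pauliString {n : ℕ} (s t : Fin n → Fin 4) :
    ∃ (r : ℝ) (u : Fin n → Fin 4),
      ⁅Complex.I • pauliString s, Complex.I • pauliString t⁆
        = r • (Complex.I • pauliString u) := by
  set C : ℂ := ∏ j, mulCoef (s j) (t j) with hC
  refine ⟨-2 * C.im, fun j => mulIdx (s j) (t j), ?_⟩
  have hidx : (fun j => mulIdx (t j) (s j)) = fun j => mulIdx (s j) (t j) := by
    funext j; exact (mulIdx_comm (s j) (t j)).symm
  have hts : pauliString t * pauliString s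
      = (starRingEnd ℂ) C • pauliString (fun j => mulIdx (s j) (t j)) := by
    rw [pauliString_mul, hidx, hC, map_prod]
    congr 1
    exact Finset.prod_congr rfl fun j _ => mulCoef_conj (s j) (t j)
  rw [Ring.lie_def, smul_mul_assoc, mul_smul_comm, smul_mul_assoc, mul_smul_comm,
    pauliString_mul s t, hts, smul_smul, smul_smul, smul_smul, smul_smul, ← sub_smul,
    ← Complex.coe_smul, smul_smul]
  congr 1
  rw [Complex.ext_iff]
  push_cast
  constructor <;> simp <;> ring

/-- For any subset `A` of the Pauli strings, the Lie algebra generated by `iA` has a basis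
of Pauli strings times `i`: it equals the real span of the elements of the form `i·p`
(`p` a Pauli string) that it contains. -/
theorem lieSpan_pauli_spanned_by_pauli (n : ℕ)
    (A : Set (Matrix (Fin n → Fin 2) (Fin n → Fin 2) ℂ)) (hA : A ⊆ PauliStrings n) :
    (LieSubalgebra.lieSpan ℝ (Matrix (Fin n → Fin 2) (Fin n → Fin 2) ℂ)
        ((fun p => Complex.I • p) '' A)).toSubmodule =
      Submodule.span ℝ
        {x | x ∈ LieSubalgebra.lieSpan ℝ (Matrix (Fin n → Fin 2) (Fin n → Fin 2) ℂ)
              ((fun p => Complex.I • p) '' A) ∧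
            ∃ p ∈ PauliStrings n, x = Complex.I • p} := by
  let M := Matrix (Fin n → Fin 2) (Fin n → Fin 2) ℂ
  set L := LieSubalgebra.lieSpan ℝ M ((fun p => Complex.I • p) '' A) with hL
  set G : Set M := {x | x ∈ L ∧ ∃ p ∈ PauliStrings n, x = Complex.I • p} with hG
  set S : Submodule ℝ M := Submodule.span ℝ G with hS
  -- the generating set is closed under brackets (up to span)
  have hgen : ∀ x ∈ G, ∀ y ∈ G, ⁅x, y⁆ ∈ S := by
    rintro x ⟨hxL, p, ⟨s, rfl⟩, rfl⟩ y ⟨hyL, q, ⟨t, rfl⟩, rfl⟩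
    obtain ⟨r, u, hru⟩ := bracket_pauliString s t
    rcases eq_or_ne r 0 with h0 | h0
    · rw [hru, h0, zero_smul]; exact S.zero_mem
    · have hmem : Complex.I • pauliString u ∈ L := by
        have hbr : ⁅Complex.I • pauliString s, Complex.I • pauliString t⁆ ∈ L :=
          L.lie_mem hxL hyL
        have : r⁻¹ • ⁅Complex.I • pauliString s, Complex.I • pauliString t⁆
            ∈ L := L.smul_mem _ hbr
        rwa [hru, smul_smul, inv_mul_cancel₀ h0, one_smul] at this
      have : Complex.I • pauliString u ∈ G := ⟨hmem, pauliString u, ⟨u, rfl⟩, rfl⟩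
      rw [hru]
      exact S.smul_mem r (Submodule.subset_span this)
  -- hence the span is closed under brackets
  have hclosed : ∀ x ∈ S, ∀ y ∈ S, ⁅x, y⁆ ∈ S := by
    intro x hx y hy
    induction hx using Submodule.span_induction with
    | mem x hxG =>
      induction hy using Submodule.span_induction with
      | mem y hyG => exact hgen _ hxG _ hyG
      | zero => simp
      | add y z _ _ hy hz => rw [lie_add]; exact S.add_mem hy hz
      | smul r y _ hy => rw [lie_smul]; exact S.smul_mem r hy
    | zero => simp
    | add x z _ _ hx' hz' => rw [add_lie]; exact S.add_mem hx' hz'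
    | smul r x _ hx' => rw [smul_lie]; exact S.smul_mem r hx'
  let K : LieSubalgebra ℝ M := { S with lie_mem' := fun {x y} hx hy => hclosed x hx y hy }
  apply le_antisymm
  · have hLK : L ≤ K := by
      rw [hL]
      apply LieSubalgebra.lieSpan_le.2
      rintro _ ⟨a, haA, rfl⟩
      have h1 : Complex.I • a ∈ L :=
        LieSubalgebra.subset_lieSpan ⟨a, haA, rfl⟩
      exact Submodule.subset_span ⟨h1, a, hA haA, rfl⟩
    exact fun x hx => hLK hx
  · exact Submodule.span_le.2 fun x hx => hx.1
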